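/- Let A be a reduced commutative ring and P a finitely generated A-module. Assume s ∈ A is a non-zerodivisor such that the localization P_s is a free A_s-module of rank r ≥ 1. Then there exist p_1,…,p_r ∈ P, A-linear maps φ_1,…,φ_r : P → A, and t ∈ ℕ such that: (i) s^t·P ⊆ F and s^t·Hom_A(P,A) ⊆ G, where F = Ap_1 + … + Ap_r and G = Aφ_1 + … + Aφ_r; and (ii) φ_i(p_j) = s^t if i = j and φ_i(p_j) = 0 if i ≠ j. -/

import Mathlib

/-- Let `A` be a reduced commutative ring and `P` a finitely generated
`A`-module. Assume `s ∈ A` is a non-zerodivisor such that the localization `P_s` is a free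
`A_s`-module of rank `r ≥ 1`. Then there exist `p₁,…,p_r ∈ P`, linear maps
`φ₁,…,φ_r : P → A` and `t ∈ ℕ` such that `sᵗ·P ⊆ A p₁ + ⋯ + A p_r`,
`sᵗ·Hom_A(P,A) ⊆ A φ₁ + ⋯ + A φ_r`, and `φᵢ(pⱼ) = sᵗ` if `i = j` and `0` otherwise. -/
theorem statement_17 (A : Type*) [CommRing A] [IsReduced A]
    (P : Type*) [AddCommGroup P] [Module A P] [Module.Finite A P]
    (s : A) (hs : s ∈ nonZeroDivisors A) (r : ℕ) (hr : 1 ≤ r)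
    (hfree : Module.Free (Localization.Away s) (LocalizedModule (Submonoid.powers s) P))
    (hrank : Module.finrank (Localization.Away s) (LocalizedModule (Submonoid.powers s) P) = r) :
    ∃ (p : Fin r → P) (φ : Fin r → (P →ₗ[A] A)) (t : ℕ),
      (∀ x : P, (s ^ t : A) • x ∈ Submodule.span A (Set.range p)) ∧
      (∀ ψ : P →ₗ[A] A, (s ^ t : A) • ψ ∈ Submodule.span A (Set.range φ)) ∧
      (∀ i j : Fin r, φ i (p j) = if i = j then s ^ t else 0) := by
  classical
  set S : Submonoid A := Submonoid.powers s with hSdef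
  let R := Localization.Away s
  let M := LocalizedModule S P
  let f : P →ₗ[A] M := LocalizedModule.mkLinearMap S P
  have hSle : S ≤ nonZeroDivisors A := by
    rintro x ⟨n, rfl⟩
    exact pow_mem hs n
  have hinj : Function.Injective (algebraMap A R) :=
    IsLocalization.injective R hSle
  have hfin : Module.Finite R M := Module.Finite.of_isLocalizedModule S f
  by_cases hA : Subsingleton A
  · refine ⟨fun _ => 0, fun _ => 0, 0, ?_, ?_, ?_⟩
    · intro x
      have : (1 : A) • x = (0 : A) • x := by rw [Subsingleton.elim (1 : A) 0]
      rw [pow_zero, this, zero_smul]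
      exact Submodule.zero_mem _
    · intro ψ
      have : (1 : A) • ψ = (0 : A) • ψ := by rw [Subsingleton.elim (1 : A) 0]
      rw [pow_zero, this, zero_smul]
      exact Submodule.zero_mem _
    · intro i j
      simp [Subsingleton.elim (s ^ 0 : A) 0]
      exact fun _ => Subsingleton.elim _ _
  have : Nontrivial A := not_subsingleton_iff_nontrivial.mp hA
  have : Nontrivial R := hinj.nontrivial
  -- a basis of M over R
  let b : Module.Basis (Fin r) R M := (Module.finBasis R M).reindex (finCongr hrank)
  -- representatives of basis vectors
  choose qu hqu using fun i => IsLocalizedModule.surj S f (b i)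
  set p : Fin r → P := fun i => (qu i).1 with hp
  set u : Fin r → S := fun i => (qu i).2 with hu
  -- rescale the basis by units so its vectors come from P
  let w : Fin r → Rˣ := fun i => (IsLocalization.map_units R (u i)).unit
  let e : Module.Basis (Fin r) R M := b.unitsSMul w
  have he : ∀ i, e i = f (p i) := by
    intro i
    have : e i = (w i : R) • b i := Module.Basis.unitsSMul_apply i
    rw [this]
    have hw : (w i : R) = algebraMap A R (u i : A) := IsUnit.unit_spec _
    rw [hw, algebraMap_smul, ← Submonoid.smul_def]
    exact hqu i
  -- coordinates, as A-linear maps P → R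
  let c : Fin r → (P →ₗ[A] R) := fun i => ((e.coord i).restrictScalars A).comp f
  have hc : ∀ i x, c i x = e.repr (f x) i := fun i x => rfl
  -- the image of A inside R
  set A₀ : Submodule A R := LinearMap.range (Algebra.linearMap A R) with hA₀
  have hden : ∀ z : R, ∃ t : ℕ, (s ^ t : A) • z ∈ A₀ := by
    intro z
    obtain ⟨⟨a, v⟩, hv⟩ := IsLocalization.surj S z
    obtain ⟨t, ht⟩ := v.2
    refine ⟨t, ?_⟩
    have ht' : (s ^ t : A) = (v : A) := ht
    have : (s ^ t : A) • z = algebraMap A R a := by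
      rw [Algebra.smul_def, ht', mul_comm]
      exact hv
    rw [this]
    exact ⟨a, rfl⟩
  have hA₀smul : ∀ (z : R) (t t' : ℕ), t ≤ t' → (s ^ t : A) • z ∈ A₀ →
      (s ^ t' : A) • z ∈ A₀ := by
    intro z t t' htt hz
    have : (s ^ t' : A) • z = (s ^ (t' - t) : A) • ((s ^ t : A) • z) := by
      rw [← mul_smul, ← pow_add]
      congr 2
      omega
    rw [this]
    exact Submodule.smul_mem _ _ hz
  -- generators of P
  obtain ⟨n, g, hg⟩ := Module.Finite.exists_fin (R := A) (M := P)
  -- uniform denominator exponent t₀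
  choose tik htik using fun (i : Fin r) (k : Fin n) => hden (c i (g k))
  set t₀ : ℕ := (Finset.univ : Finset (Fin r × Fin n)).sup (fun ik => tik ik.1 ik.2) with ht₀
  have hct : ∀ i x, (s ^ t₀ : A) • c i x ∈ A₀ := by
    intro i x
    have hK : (⊤ : Submodule A P) ≤
        Submodule.comap ((s ^ t₀ : A) • c i) A₀ := by
      rw [← hg, Submodule.span_le]
      rintro _ ⟨k, rfl⟩
      exact hA₀smul _ _ _ (Finset.le_sup (f := fun ik => tik ik.1 ik.2)
        (Finset.mem_univ (i, k))) (htik i k)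
    exact hK (Submodule.mem_top (x := x))
  -- the maps φ₀
  let E : A ≃ₗ[A] A₀ := LinearEquiv.ofInjective (Algebra.linearMap A R) hinj
  let φ₀ : Fin r → (P →ₗ[A] A) := fun i =>
    E.symm.toLinearMap.comp (LinearMap.codRestrict A₀ ((s ^ t₀ : A) • c i) (hct i))
  have hφ₀ : ∀ i x, algebraMap A R (φ₀ i x) = (s ^ t₀ : A) • c i x := by
    intro i x
    have h1 : E (φ₀ i x) = LinearMap.codRestrict A₀ ((s ^ t₀ : A) • c i) (hct i) x :=
      E.apply_symm_apply _
    have h2 : (E (φ₀ i x) : R) = algebraMap A R (φ₀ i x) := rfl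
    have := congrArg (Subtype.val) h1
    rw [h2] at this
    simpa using this
  -- diagonal property
  have hdiag : ∀ i j, φ₀ i (p j) = if i = j then s ^ t₀ else 0 := by
    intro i j
    apply hinj
    rw [hφ₀]
    have : c i (p j) = if j = i then 1 else 0 := by
      rw [hc, ← he j, Module.Basis.repr_self, Finsupp.single_apply]
    rw [this]
    by_cases hij : i = j
    · subst hij
      simp [Algebra.smul_def]
    · have : ¬ j = i := fun h => hij h.symm
      simp [hij, this]
  -- every s^t₀ • ψ is an explicit combination of the φ₀
  have hψeq : ∀ ψ : P →ₗ[A] A, (s ^ t₀ : A) • ψ = ∑ i, ψ (p i) • φ₀ i := by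
    intro ψ
    ext x
    apply hinj
    -- the localized map
    let Ψ : M →ₗ[R] R :=
      IsLocalizedModule.mapExtendScalars S f (Algebra.linearMap A R) R ψ
    have hΨ : ∀ y : P, Ψ (f y) = algebraMap A R (ψ y) := by
      intro y
      exact IsLocalizedModule.map_apply S f (Algebra.linearMap A R) ψ y
    have hexp : algebraMap A R (ψ x) = ∑ i, e.repr (f x) i * algebraMap A R (ψ (p i)) := by
      rw [← hΨ x]
      conv_lhs => rw [← Module.Basis.sum_repr e (f x)]
      rw [map_sum]
      refine Finset.sum_congr rfl fun i _ => ?_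
      rw [LinearMap.map_smul, smul_eq_mul, he, hΨ]
    have lhs : algebraMap A R (((s ^ t₀ : A) • ψ) x) =
        (s ^ t₀ : A) • algebraMap A R (ψ x) := by
      simp [Algebra.smul_def, mul_assoc]
    rw [lhs, hexp, Finset.smul_sum]
    have rhs : algebraMap A R ((∑ i, ψ (p i) • φ₀ i) x) =
        ∑ i, algebraMap A R (φ₀ i x) * algebraMap A R (ψ (p i)) := by
      simp only [LinearMap.sum_apply, LinearMap.smul_apply, smul_eq_mul, map_sum, map_mul]
      exact Finset.sum_congr rfl fun i _ => mul_comm _ _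
    rw [rhs]
    refine Finset.sum_congr rfl fun i _ => ?_
    rw [hφ₀, hc, smul_mul_assoc]
  -- s^t₀ • x minus its expansion dies in the localization
  have hker : ∀ x : P, f ((s ^ t₀ : A) • x - ∑ i, φ₀ i x • p i) = 0 := by
    intro x
    rw [map_sub, sub_eq_zero, map_smul, map_sum]
    conv_lhs => rw [← Module.Basis.sum_repr e (f x)]
    rw [Finset.smul_sum]
    refine Finset.sum_congr rfl fun i _ => ?_
    rw [map_smul, ← he i, ← algebraMap_smul R (φ₀ i x) (e i), hφ₀ i x, hc i x]
    exact (smul_assoc _ _ _).symm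
  -- uniform torsion exponent on the generators
  have hker' : ∀ x : P, ∃ m : ℕ, (s ^ m : A) • ((s ^ t₀ : A) • x - ∑ i, φ₀ i x • p i) = 0 := by
    intro x
    obtain ⟨v, hv⟩ := (IsLocalizedModule.eq_zero_iff S f).mp (hker x)
    obtain ⟨m, hm⟩ := v.2
    have hm' : (s ^ m : A) = (v : A) := hm
    exact ⟨m, by rw [hm']; rw [Submonoid.smul_def] at hv; exact hv⟩
  choose mk hmk using fun k => hker' (g k)
  set m : ℕ := (Finset.univ : Finset (Fin n)).sup mk with hm
  set T : ℕ := m + t₀ with hT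
  set φ : Fin r → (P →ₗ[A] A) := fun i => (s ^ m : A) • φ₀ i with hφdef
  refine ⟨p, φ, T, ?_, ?_, ?_⟩
  · -- s^T • x ∈ span p
    intro x
    set N : Submodule A P := Submodule.span A (Set.range p) with hN
    have hK : (⊤ : Submodule A P) ≤
        Submodule.comap ((s ^ T : A) • (LinearMap.id : P →ₗ[A] P)) N := by
      rw [← hg, Submodule.span_le]
      rintro _ ⟨k, rfl⟩
      show (s ^ T : A) • (g k) ∈ N
      have h1 : (s ^ mk k : A) • ((s ^ t₀ : A) • g k - ∑ i, φ₀ i (g k) • p i) = 0 := hmk k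
      have h2 : (s ^ m : A) • ((s ^ t₀ : A) • g k - ∑ i, φ₀ i (g k) • p i) = 0 := by
        have : (s ^ m : A) = (s ^ (m - mk k) : A) * (s ^ mk k : A) := by
          rw [← pow_add]
          congr 1
          have := Finset.le_sup (f := mk) (Finset.mem_univ k)
          omega
        rw [this, mul_smul, h1, smul_zero]
      have h3 : (s ^ T : A) • g k = (s ^ m : A) • ∑ i, φ₀ i (g k) • p i := by
        have h2' : (s ^ m : A) • ((s ^ t₀ : A) • g k)
            - (s ^ m : A) • (∑ i, φ₀ i (g k) • p i) = 0 := by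
          rw [← smul_sub]; exact h2
        rw [hT, pow_add, mul_smul]
        exact sub_eq_zero.mp h2'
      rw [h3]
      refine Submodule.smul_mem _ _ (Submodule.sum_mem _ fun i _ => ?_)
      exact Submodule.smul_mem _ _ (Submodule.subset_span ⟨i, rfl⟩)
    exact hK (Submodule.mem_top (x := x))
  · -- s^T • ψ ∈ span φ
    intro ψ
    have : (s ^ T : A) • ψ = ∑ i, ψ (p i) • φ i := by
      rw [hT, pow_add, mul_smul, hψeq ψ, Finset.smul_sum]
      refine Finset.sum_congr rfl fun i _ => ?_
      exact smul_comm _ _ _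
    rw [this]
    exact Submodule.sum_mem _ fun i _ =>
      Submodule.smul_mem _ _ (Submodule.subset_span ⟨i, rfl⟩)
  · -- diagonal
    intro i j
    have : φ i (p j) = (s ^ m : A) * φ₀ i (p j) := rfl
    rw [this, hdiag i j]
    by_cases hij : i = j
    · simp [hij, hT, pow_add]
    · simp [hij]
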